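/- Let A be a module over a commutative ring, and let d, δ : A → A be linear maps with d∘d = 0, δ∘δ = 0 and d∘δ + δ∘d = 0, satisfying the dδ-lemma: every x with d x = 0 and δ x = 0 that can be written as x = d y + δ z lies in the range of d∘δ. Then (i) for every x with d x = 0 there exists w such that δ(x + d w) = 0 (note d(x + d w) = 0 automatically), and (ii) every x with d x = 0 and δ x = 0 that lies in the range of d lies in the range of d∘δ. Consequently the inclusion of ker d ∩ ker δ into ker d induces a linear isomorphism (ker d ∩ ker δ)/range(d∘δ) ≅ ker d / range d. -/

import Mathlib

/-- **dδ-lemma consequences, `d`-side.**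
If `d, δ : A → A` are linear with `d ∘ d = 0`, `δ ∘ δ = 0`, `d ∘ δ + δ ∘ d = 0` and the
`dδ`-lemma holds, then (i) every `d`-closed `x` can be corrected by an exact term to become
`δ`-closed, (ii) every `d`- and `δ`-closed element of `range d` lies in `range (d ∘ δ)`, and
consequently the inclusion `ker d ⊓ ker δ ↪ ker d` induces a linear isomorphism
`(ker d ⊓ ker δ) / range (d ∘ δ) ≃ ker d / range d`. -/
theorem ddelta_lemma_d_side {R : Type*} [CommRing R] {A : Type*} [AddCommGroup A] [Module R A]
    (d δ : A →ₗ[R] A)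
    (hdd : d ∘ₗ d = 0) (hδδ : δ ∘ₗ δ = 0) (hanti : d ∘ₗ δ + δ ∘ₗ d = 0)
    (hlemma : ∀ x : A, d x = 0 → δ x = 0 → (∃ y z : A, x = d y + δ z) →
      x ∈ LinearMap.range (d ∘ₗ δ)) :
    (∀ x : A, d x = 0 → ∃ w : A, δ (x + d w) = 0) ∧
    (∀ x : A, d x = 0 → δ x = 0 → x ∈ LinearMap.range d → x ∈ LinearMap.range (d ∘ₗ δ)) ∧
    (∃ e : (↥(LinearMap.ker d ⊓ LinearMap.ker δ) ⧸
              (LinearMap.range (d ∘ₗ δ)).comap (LinearMap.ker d ⊓ LinearMap.ker δ).subtype)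
           ≃ₗ[R]
           (↥(LinearMap.ker d) ⧸ (LinearMap.range d).comap (LinearMap.ker d).subtype),
      ∀ x : ↥(LinearMap.ker d ⊓ LinearMap.ker δ),
        e (Submodule.Quotient.mk x) =
          Submodule.Quotient.mk (Submodule.inclusion inf_le_left x)) := by
  have hdd' : ∀ a, d (d a) = 0 := fun a => by simpa using LinearMap.congr_fun hdd a
  have hδδ' : ∀ a, δ (δ a) = 0 := fun a => by simpa using LinearMap.congr_fun hδδ a
  have hanti' : ∀ a, d (δ a) + δ (d a) = 0 := fun a => by
    simpa using LinearMap.congr_fun hanti a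
  have part1 : ∀ x : A, d x = 0 → ∃ w : A, δ (x + d w) = 0 := by
    intro x hx
    have h1 : d (δ x) = 0 := by
      have := hanti' x; rw [hx, map_zero, add_zero] at this; exact this
    obtain ⟨u, hu⟩ := hlemma (δ x) h1 (hδδ' x) ⟨0, x, by simp⟩
    simp only [LinearMap.comp_apply] at hu
    refine ⟨u, ?_⟩
    have h2 : δ (d u) = - d (δ u) := eq_neg_of_add_eq_zero_right (hanti' u)
    rw [map_add, h2, hu, add_neg_cancel]
  have part2 : ∀ x : A, d x = 0 → δ x = 0 → x ∈ LinearMap.range d →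
      x ∈ LinearMap.range (d ∘ₗ δ) := by
    rintro x hx hδx ⟨y, hy⟩
    exact hlemma x hx hδx ⟨y, 0, by simp [hy]⟩
  refine ⟨part1, part2, ?_⟩
  set K := LinearMap.ker d ⊓ LinearMap.ker δ with hK
  set P := (LinearMap.range (d ∘ₗ δ)).comap K.subtype with hP
  set Q := (LinearMap.range d).comap (LinearMap.ker d).subtype with hQ
  let f : K →ₗ[R] (↥(LinearMap.ker d) ⧸ Q) :=
    Q.mkQ.comp (Submodule.inclusion inf_le_left)
  have hPf : P ≤ LinearMap.ker f := by
    rintro ⟨x, hxK⟩ hxP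
    obtain ⟨y, hy⟩ : x ∈ LinearMap.range (d ∘ₗ δ) := hxP
    simp only [LinearMap.mem_ker, f, LinearMap.comp_apply, Submodule.mkQ_apply,
      Submodule.Quotient.mk_eq_zero, Submodule.mem_comap, hQ]
    exact ⟨δ y, by simpa using hy⟩
  let g := Submodule.liftQ P f hPf
  have hg : Function.Bijective g := by
    constructor
    · rw [← LinearMap.ker_eq_bot, Submodule.ker_liftQ_eq_bot]
      rintro ⟨x, hxK⟩ hxf
      have hxd : x ∈ LinearMap.ker d := hxK.1
      have hxδ : x ∈ LinearMap.ker δ := hxK.2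
      have : (⟨x, hxd⟩ : LinearMap.ker d) ∈ Q := by
        simpa only [LinearMap.mem_ker, f, LinearMap.comp_apply, Submodule.mkQ_apply,
          Submodule.Quotient.mk_eq_zero, Submodule.inclusion_apply] using hxf
      obtain ⟨y, hy⟩ : x ∈ LinearMap.range d := this
      exact part2 x hxd hxδ ⟨y, hy⟩
    · intro q
      obtain ⟨⟨x, hx⟩, rfl⟩ := Submodule.Quotient.mk_surjective Q q
      obtain ⟨w, hw⟩ := part1 x hx
      have hxw : x + d w ∈ K := ⟨by simp [LinearMap.mem_ker, map_add, hdd', LinearMap.mem_ker.mp hx], hw⟩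
      refine ⟨Submodule.Quotient.mk (⟨x + d w, hxw⟩ : K), ?_⟩
      have : g (Submodule.Quotient.mk (⟨x + d w, hxw⟩ : K)) =
          Submodule.Quotient.mk (⟨x + d w, hxw.1⟩ : LinearMap.ker d) := rfl
      rw [this, Submodule.Quotient.eq]
      exact ⟨w, by simp⟩
  refine ⟨LinearEquiv.ofBijective g hg, fun x => rfl⟩
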